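/- With perturbed unit-direction precoder v̂/‖v̂‖ and combiner û/‖û‖ where û = u + Δu, v̂ = v + Δv, and where Δu* u = 0, Δv* v = 0, u* H Δv = 0, Δu* H v = 0, Δu* H Δv = 0 for the rank-one channel H = √(N_R N_T) α u v*, the received signal is y = (√(N_R N_T) α s)/(‖û‖‖v̂‖) + (û*/‖û‖) n, so the average SNR equals N_R N_T P σ_α² / (K σ_n² ‖û‖² ‖v̂‖²), and the SNR loss relative to perfect covariance is γ = ‖û‖² ‖v̂‖². -/

import Mathlib

open scoped BigOperators Matrix
open MeasureTheory ProbabilityTheory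

/-- Euclidean norm of a complex vector. -/
noncomputable def vnorm {n : ℕ} (v : Fin n → ℂ) : ℝ := Real.sqrt (∑ i, ‖v i‖ ^ 2)

lemma sum_conj_mul_self {m : ℕ} (w : Fin m → ℂ) :
    ∑ i, star (w i) * w i = ((∑ i, ‖w i‖ ^ 2 : ℝ) : ℂ) := by
  push_cast
  exact Finset.sum_congr rfl fun i _ => by
    simp [Complex.star_def, Complex.conj_mul']

lemma vnorm_sq {m : ℕ} (w : Fin m → ℂ) : (vnorm w) ^ 2 = ∑ i, ‖w i‖ ^ 2 := by
  rw [vnorm, Real.sq_sqrt]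
  positivity

lemma perturbed_sum {m : ℕ} (w dw : Fin m → ℂ) (hw : ∑ i, ‖w i‖ ^ 2 = 1)
    (hd : ∑ i, star (dw i) * w i = 0) :
    ∑ i, ‖w i + dw i‖ ^ 2 = 1 + ∑ i, ‖dw i‖ ^ 2 := by
  have h : ∀ z : ℂ, ‖z‖ ^ 2 = Complex.normSq z := fun z => by
    rw [Complex.sq_norm]
  have hre : (∑ i, w i * (starRingEnd ℂ) (dw i)).re = 0 := by
    have : ∑ i, w i * (starRingEnd ℂ) (dw i) = 0 := by
      rw [← hd]; exact Finset.sum_congr rfl fun i _ => by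
        simp [Complex.star_def, mul_comm]
    rw [this]; simp
  calc ∑ i, ‖w i + dw i‖ ^ 2
      = ∑ i, (Complex.normSq (w i) + Complex.normSq (dw i)
          + 2 * (w i * (starRingEnd ℂ) (dw i)).re) := by
        exact Finset.sum_congr rfl fun i _ => by rw [h, Complex.normSq_add]
    _ = ∑ i, ‖w i‖ ^ 2 + ∑ i, ‖dw i‖ ^ 2
          + 2 * (∑ i, w i * (starRingEnd ℂ) (dw i)).re := by
        rw [Finset.sum_add_distrib, Finset.sum_add_distrib, ← Finset.mul_sum,
          Complex.re_sum]
        simp only [← h]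
    _ = 1 + ∑ i, ‖dw i‖ ^ 2 := by rw [hw, hre]; ring

theorem stmt19 {NR NT K : ℕ} (hNR : 0 < NR) (hNT : 0 < NT) (hK : 0 < K)
    {Ω : Type*} [MeasurableSpace Ω] (μ : Measure Ω) [IsProbabilityMeasure μ]
    (u : Fin NR → ℂ) (v : Fin NT → ℂ)
    (hu : ∑ i, ‖u i‖ ^ 2 = 1) (hv : ∑ i, ‖v i‖ ^ 2 = 1)
    (Δu : Fin NR → ℂ) (Δv : Fin NT → ℂ)
    (uhat : Fin NR → ℂ) (vhat : Fin NT → ℂ)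
    (huhat : uhat = u + Δu) (hvhat : vhat = v + Δv)
    (hΔu : ∑ i, star (Δu i) * u i = 0) (hΔv : ∑ i, star (Δv i) * v i = 0)
    (α s : Ω → ℂ) (n : Ω → Fin NR → ℂ)
    (σα P σn : ℝ) (hσα : 0 < σα) (hP : 0 < P) (hσn : 0 < σn)
    (hα2 : Integrable (fun ω => ‖α ω‖ ^ 2) μ)
    (hs2 : Integrable (fun ω => ‖s ω‖ ^ 2) μ)
    (hα : ∫ ω, ‖α ω‖ ^ 2 ∂μ = σα ^ 2)
    (hs : ∫ ω, ‖s ω‖ ^ 2 ∂μ = P / K)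
    (hαs : IndepFun α s μ)
    (hnn_int : ∀ i j, Integrable (fun ω => n ω i * star (n ω j)) μ)
    (hnn : ∀ i j, ∫ ω, n ω i * star (n ω j) ∂μ =
      if i = j then ((σn ^ 2 : ℝ) : ℂ) else 0)
    (H : Ω → Matrix (Fin NR) (Fin NT) ℂ)
    (hH : ∀ ω, H ω =
      ((Real.sqrt (NR * NT) : ℝ) : ℂ) • (α ω • Matrix.vecMulVec u (star v)))
    (hc1 : ∀ ω, ∑ i, star (u i) * ((H ω).mulVec Δv) i = 0)
    (hc2 : ∀ ω, ∑ i, star (Δu i) * ((H ω).mulVec v) i = 0)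
    (hc3 : ∀ ω, ∑ i, star (Δu i) * ((H ω).mulVec Δv) i = 0)
    (y : Ω → ℂ)
    (hy : ∀ ω, y ω =
      (((vnorm uhat * vnorm vhat : ℝ) : ℂ))⁻¹ *
          (∑ i, star (uhat i) * ((H ω).mulVec vhat) i) * s ω +
        (((vnorm uhat : ℝ) : ℂ))⁻¹ * ∑ i, star (uhat i) * n ω i) :
    (∀ ω, y ω =
      (((vnorm uhat * vnorm vhat : ℝ) : ℂ))⁻¹ *
          (((Real.sqrt (NR * NT) : ℝ) : ℂ) * α ω * s ω) +
        (((vnorm uhat : ℝ) : ℂ))⁻¹ * ∑ i, star (uhat i) * n ω i) ∧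
    (∫ ω, ‖(((vnorm uhat * vnorm vhat : ℝ) : ℂ))⁻¹ *
          (((Real.sqrt (NR * NT) : ℝ) : ℂ) * α ω * s ω)‖ ^ 2 ∂μ) /
        (∫ ω, ‖(((vnorm uhat : ℝ) : ℂ))⁻¹ * ∑ i, star (uhat i) * n ω i‖ ^ 2 ∂μ) =
      ((NR : ℝ) * NT * P * σα ^ 2) /
        (K * σn ^ 2 * (vnorm uhat) ^ 2 * (vnorm vhat) ^ 2) ∧
    (((NR : ℝ) * NT * P * σα ^ 2) / (K * σn ^ 2)) /
        ((∫ ω, ‖(((vnorm uhat * vnorm vhat : ℝ) : ℂ))⁻¹ *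
            (((Real.sqrt (NR * NT) : ℝ) : ℂ) * α ω * s ω)‖ ^ 2 ∂μ) /
          (∫ ω, ‖(((vnorm uhat : ℝ) : ℂ))⁻¹ * ∑ i, star (uhat i) * n ω i‖ ^ 2 ∂μ)) =
      (vnorm uhat) ^ 2 * (vnorm vhat) ^ 2 := by
  -- norms of the perturbed vectors
  have hA : (vnorm uhat) ^ 2 = 1 + ∑ i, ‖Δu i‖ ^ 2 := by
    rw [vnorm_sq, huhat]
    simpa using perturbed_sum u Δu hu hΔu
  have hB : (vnorm vhat) ^ 2 = 1 + ∑ i, ‖Δv i‖ ^ 2 := by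
    rw [vnorm_sq, hvhat]
    simpa using perturbed_sum v Δv hv hΔv
  have hApos : 0 < (vnorm uhat) ^ 2 := by
    have h1 : (0:ℝ) ≤ ∑ i, ‖Δu i‖ ^ 2 := Finset.sum_nonneg fun i _ => sq_nonneg _
    rw [hA]; linarith
  have hBpos : 0 < (vnorm vhat) ^ 2 := by
    have h1 : (0:ℝ) ≤ ∑ i, ‖Δv i‖ ^ 2 := Finset.sum_nonneg fun i _ => sq_nonneg _
    rw [hB]; linarith
  have hAn : 0 < vnorm uhat := by
    have h0 : (0:ℝ) ≤ vnorm uhat := Real.sqrt_nonneg _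
    nlinarith
  have hBn : 0 < vnorm vhat := by
    have h0 : (0:ℝ) ≤ vnorm vhat := Real.sqrt_nonneg _
    nlinarith

  set r : ℝ := Real.sqrt (NR * NT) with hr
  have hrnn : 0 ≤ r := Real.sqrt_nonneg _
  have hr2 : r ^ 2 = (NR : ℝ) * NT := Real.sq_sqrt (by positivity)
  have hVV : ∑ j, star (v j) * v j = 1 := by rw [sum_conj_mul_self, hv]; norm_num
  have hUU : ∑ i, star (u i) * u i = 1 := by rw [sum_conj_mul_self, hu]; norm_num
  -- the effective channel gain
  have h1 : ∀ ω i, ((H ω).mulVec v) i = (r : ℂ) * α ω * u i := by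
    intro ω i
    rw [hH]
    show ∑ j, ((r : ℂ) • α ω • Matrix.vecMulVec u (star v)) i j * v j = _
    simp only [Matrix.smul_apply, Matrix.vecMulVec_apply, Pi.star_apply, smul_eq_mul]
    calc ∑ j, (r : ℂ) * (α ω * (u i * star (v j))) * v j
        = ((r : ℂ) * α ω * u i) * ∑ j, star (v j) * v j := by
          rw [Finset.mul_sum]; exact Finset.sum_congr rfl fun j _ => by ring
      _ = (r : ℂ) * α ω * u i := by rw [hVV, mul_one]
  have hsig : ∀ ω, ∑ i, star (uhat i) * ((H ω).mulVec vhat) i = (r : ℂ) * α ω := by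
    intro ω
    rw [huhat, hvhat]
    have expand : ∑ i, star ((u + Δu) i) * ((H ω).mulVec (v + Δv)) i =
        (∑ i, star (u i) * ((H ω).mulVec v) i) +
        (∑ i, star (u i) * ((H ω).mulVec Δv) i) +
        (∑ i, star (Δu i) * ((H ω).mulVec v) i) +
        (∑ i, star (Δu i) * ((H ω).mulVec Δv) i) := by
      simp only [Matrix.mulVec_add, Pi.add_apply, star_add]
      rw [← Finset.sum_add_distrib, ← Finset.sum_add_distrib, ← Finset.sum_add_distrib]
      exact Finset.sum_congr rfl fun i _ => by ring
    rw [expand, hc1 ω, hc2 ω, hc3 ω]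
    calc (∑ i, star (u i) * ((H ω).mulVec v) i) + 0 + 0 + 0
        = ∑ i, star (u i) * ((r : ℂ) * α ω * u i) := by
          rw [add_zero, add_zero, add_zero]
          exact Finset.sum_congr rfl fun i _ => by rw [h1]
      _ = (r : ℂ) * α ω * ∑ i, star (u i) * u i := by
          rw [Finset.mul_sum]; exact Finset.sum_congr rfl fun i _ => by ring
      _ = (r : ℂ) * α ω := by rw [hUU, mul_one]
  -- numerator integral
  have hcpos : 0 < vnorm uhat * vnorm vhat := mul_pos hAn hBn
  have hpt : ∀ ω, ‖(((vnorm uhat * vnorm vhat : ℝ) : ℂ))⁻¹ *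
      ((r : ℂ) * α ω * s ω)‖ ^ 2 =
      (((vnorm uhat) ^ 2 * (vnorm vhat) ^ 2)⁻¹ * r ^ 2) * (‖α ω‖ ^ 2 * ‖s ω‖ ^ 2) := by
    intro ω
    rw [norm_mul, norm_mul, norm_mul, norm_inv, Complex.norm_real, Complex.norm_real,
      Real.norm_eq_abs, Real.norm_eq_abs, abs_of_pos hcpos, abs_of_nonneg hrnn]
    field_simp
  have hind : IndepFun (fun ω => ‖α ω‖ ^ 2) (fun ω => ‖s ω‖ ^ 2) μ :=
    hαs.comp (measurable_norm.pow_const 2) (measurable_norm.pow_const 2)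
  have hprod : ∫ ω, ‖α ω‖ ^ 2 * ‖s ω‖ ^ 2 ∂μ = σα ^ 2 * (P / K) := by
    have h := hind.integral_fun_mul_eq_mul_integral hα2.1 hs2.1
    rw [hα, hs] at h
    exact h
  have hnum : ∫ ω, ‖(((vnorm uhat * vnorm vhat : ℝ) : ℂ))⁻¹ *
      ((r : ℂ) * α ω * s ω)‖ ^ 2 ∂μ =
      (((vnorm uhat) ^ 2 * (vnorm vhat) ^ 2)⁻¹ * r ^ 2) * (σα ^ 2 * (P / K)) := by
    simp_rw [hpt]
    rw [integral_const_mul, hprod]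
  -- noise integral
  have hgint : ∀ i, Integrable (fun ω => ∑ j, (star (uhat i) * uhat j) *
      (n ω i * star (n ω j))) μ :=
    fun i => integrable_finset_sum _ fun j _ => (hnn_int i j).const_mul _
  have hg : Integrable (fun ω => ∑ i, ∑ j, (star (uhat i) * uhat j) *
      (n ω i * star (n ω j))) μ := integrable_finset_sum _ fun i _ => hgint i
  have hgval : ∫ ω, (∑ i, ∑ j, (star (uhat i) * uhat j) * (n ω i * star (n ω j))) ∂μ
      = ((σn ^ 2 * (vnorm uhat) ^ 2 : ℝ) : ℂ) := by
    rw [integral_finset_sum _ fun i _ => hgint i]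
    calc ∑ i, ∫ ω, (∑ j, (star (uhat i) * uhat j) * (n ω i * star (n ω j))) ∂μ
        = ∑ i, ∑ j, (star (uhat i) * uhat j) * ∫ ω, n ω i * star (n ω j) ∂μ := by
          exact Finset.sum_congr rfl fun i _ => by
            rw [integral_finset_sum _ fun j _ => (hnn_int i j).const_mul _]
            exact Finset.sum_congr rfl fun j _ => integral_const_mul _ _
      _ = ∑ i, (star (uhat i) * uhat i) * ((σn ^ 2 : ℝ) : ℂ) := by
          exact Finset.sum_congr rfl fun i _ => by
            simp only [hnn, mul_ite, mul_zero, Finset.sum_ite_eq, Finset.mem_univ,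
              if_true]
      _ = ((σn ^ 2 * (vnorm uhat) ^ 2 : ℝ) : ℂ) := by
          rw [← Finset.sum_mul, sum_conj_mul_self, vnorm_sq]
          push_cast
          ring
  have hzpt : ∀ ω, ‖∑ i, star (uhat i) * n ω i‖ ^ 2 =
      (∑ i, ∑ j, (star (uhat i) * uhat j) * (n ω i * star (n ω j))).re := by
    intro ω
    have hz : (∑ i, star (uhat i) * n ω i) *
        (starRingEnd ℂ) (∑ j, star (uhat j) * n ω j) =
        ∑ i, ∑ j, (star (uhat i) * uhat j) * (n ω i * star (n ω j)) := by
      rw [map_sum, Finset.sum_mul_sum]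
      exact Finset.sum_congr rfl fun i _ => Finset.sum_congr rfl fun j _ => by
        simp only [Complex.star_def, map_mul, Complex.conj_conj]
        ring
    calc ‖∑ i, star (uhat i) * n ω i‖ ^ 2
        = ((‖∑ i, star (uhat i) * n ω i‖ ^ 2 : ℝ) : ℂ).re := (Complex.ofReal_re _).symm
      _ = ((∑ i, star (uhat i) * n ω i) *
            (starRingEnd ℂ) (∑ j, star (uhat j) * n ω j)).re := by
          rw [Complex.mul_conj', ← Complex.ofReal_pow]
      _ = _ := by rw [hz]
  have hinner : ∫ ω, ‖∑ i, star (uhat i) * n ω i‖ ^ 2 ∂μ = σn ^ 2 * (vnorm uhat) ^ 2 := by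
    simp_rw [hzpt]
    have h2 : ∫ ω, (∑ i, ∑ j, (star (uhat i) * uhat j) * (n ω i * star (n ω j))).re ∂μ
        = (∫ ω, (∑ i, ∑ j, (star (uhat i) * uhat j) * (n ω i * star (n ω j))) ∂μ).re :=
      integral_re hg
    rw [h2, hgval, Complex.ofReal_re]
  have hnoise : ∫ ω, ‖(((vnorm uhat : ℝ) : ℂ))⁻¹ * ∑ i, star (uhat i) * n ω i‖ ^ 2 ∂μ
      = σn ^ 2 := by
    have hpt2 : ∀ ω, ‖(((vnorm uhat : ℝ) : ℂ))⁻¹ * ∑ i, star (uhat i) * n ω i‖ ^ 2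
        = ((vnorm uhat) ^ 2)⁻¹ * ‖∑ i, star (uhat i) * n ω i‖ ^ 2 := by
      intro ω
      rw [norm_mul, norm_inv, Complex.norm_real, Real.norm_eq_abs, abs_of_pos hAn]
      rw [mul_pow, inv_pow]
    simp_rw [hpt2]
    rw [integral_const_mul, hinner]
    field_simp
  refine ⟨fun ω => ?_, ?_, ?_⟩
  · rw [hy ω, hsig ω]; ring
  · rw [hnum, hnoise, hr2]
    have hKpos : (0:ℝ) < K := Nat.cast_pos.mpr hK
    field_simp
  · rw [hnum, hnoise, hr2]
    have hKpos : (0:ℝ) < K := Nat.cast_pos.mpr hK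
    have hNRpos : (0:ℝ) < NR := Nat.cast_pos.mpr hNR
    have hNTpos : (0:ℝ) < NT := Nat.cast_pos.mpr hNT
    field_simp
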